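/- Let λ ∈ ℝ and let x, θ : ℝ → ℝ with x differentiable on [0, ∞), x'(s) = cos θ(s) for all s ≥ 0, x(s) → ∞ as s → ∞, and suppose the identity 1 − cos θ(s) = x(s)²/2 + λ·∫₀ˢ x(t) dt holds for all s ≥ 0. If cos θ(s) converges to a limit L as s → ∞ with L ≠ 0, then L = −λ. -/

import Mathlib

open Filter

open Set intervalIntegral MeasureTheory

/-- If `x' = cos θ` on `[0, ∞)`, `x(s) → ∞`, the first integral
`1 − cos θ(s) = x(s)²/2 + λ ∫₀ˢ x(t) dt` holds, and `cos θ(s) → L ≠ 0` as `s → ∞`,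
then `L = −λ`. -/
theorem rotational_translator_asymptotic_angle
    (lam L : ℝ) (x θ : ℝ → ℝ)
    (hx : ∀ s : ℝ, 0 ≤ s → HasDerivWithinAt x (Real.cos (θ s)) (Set.Ici 0) s)
    (hxinf : Tendsto x atTop atTop)
    (hid : ∀ s : ℝ, 0 ≤ s →
      1 - Real.cos (θ s) = x s ^ 2 / 2 + lam * ∫ t in (0 : ℝ)..s, x t)
    (hL : Tendsto (fun s => Real.cos (θ s)) atTop (nhds L))
    (hLne : L ≠ 0) :
    L = -lam := by
  by_contra hne
  have hLl : L + lam ≠ 0 := fun h => hne (by linarith [h])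
  have habs : 0 < |L + lam| := abs_pos.mpr hLl
  set ε : ℝ := |L + lam| / 2 with hεdef
  have hε : 0 < ε := by positivity
  -- x is continuous at every s > 0
  have hxcont : ∀ s : ℝ, 0 < s → ContinuousAt x s := fun s hs =>
    ((hx s hs.le).continuousWithinAt).continuousAt (Ici_mem_nhds hs)
  have hxconOn : ContinuousOn x (Set.Ici 0) := fun s hs =>
    (hx s hs).continuousWithinAt
  -- G and its derivative
  set G : ℝ → ℝ := fun s => x s ^ 2 / 2 + lam * ∫ t in (0:ℝ)..s, x t with hGdef
  have hG' : ∀ s : ℝ, 0 < s →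
      HasDerivAt G (x s * Real.cos (θ s) + lam * x s) s := by
    intro s hs
    have hxd : HasDerivAt x (Real.cos (θ s)) s :=
      (hx s hs.le).hasDerivAt (Ici_mem_nhds hs)
    have h1 : HasDerivAt (fun u => x u ^ 2 / 2) (x s * Real.cos (θ s)) s := by
      have : HasDerivAt (fun u => x u ^ 2 / 2) _ s := (hxd.fun_pow 2).div_const 2
      convert this using 1
      ring
    have hint : IntervalIntegrable x volume 0 s := by
      apply ContinuousOn.intervalIntegrable
      apply hxconOn.mono
      rw [Set.uIcc_of_le hs.le]
      exact fun t ht => ht.1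
    have hmeas : StronglyMeasurableAtFilter x (nhds s) volume :=
      ContinuousAt.stronglyMeasurableAtFilter isOpen_Ioi
        (fun t ht => hxcont t ht) s hs
    have h2 : HasDerivAt (fun u => ∫ t in (0:ℝ)..u, x t) (x s) s :=
      integral_hasDerivAt_right hint hmeas (hxcont s hs)
    exact h1.add (h2.const_mul lam)
  -- G tends to 1 - L
  have hGt : Tendsto G atTop (nhds (1 - L)) := by
    have heq : (fun s => 1 - Real.cos (θ s)) =ᶠ[atTop] G := by
      filter_upwards [eventually_ge_atTop (0:ℝ)] with s hs
      exact hid s hs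
    exact Tendsto.congr' heq (tendsto_const_nhds.sub hL)
  have hdiff : Tendsto (fun s => G (s + 1) - G s) atTop (nhds 0) := by
    have h1 : Tendsto (fun s => G (s + 1)) atTop (nhds (1 - L)) :=
      hGt.comp (tendsto_atTop_add_const_right _ 1 tendsto_id)
    simpa using h1.sub hGt
  -- eventual estimates
  have h2 : ∀ᶠ t in atTop, ε ≤ |Real.cos (θ t) + lam| := by
    have htt : Tendsto (fun t => |Real.cos (θ t) + lam|) atTop (nhds |L + lam|) :=
      ((hL.add_const lam).abs)
    exact htt.eventually (eventually_ge_nhds (by linarith))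
  have h1 : ∀ᶠ t in atTop, (1:ℝ) ≤ x t := hxinf.eventually_ge_atTop 1
  have h3 : ∀ᶠ s in atTop, |G (s + 1) - G s| < ε := by
    have := hdiff.eventually (eventually_abs_sub_lt 0 hε)
    simpa using this
  obtain ⟨s₀, hs₀⟩ := (eventually_atTop.1 (h1.and h2))
  obtain ⟨s, hs⟩ :=
    (eventually_atTop.1 (h3.and (eventually_ge_atTop (max s₀ 1))))
  obtain ⟨hsG, hsge⟩ := hs s le_rfl
  have hs1 : (1:ℝ) ≤ s := le_trans (le_max_right _ _) hsge
  have hss0 : s₀ ≤ s := le_trans (le_max_left _ _) hsge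
  -- MVT on [s, s+1]
  have hlt : s < s + 1 := by linarith
  have hcont : ContinuousOn G (Set.Icc s (s + 1)) := by
    intro t ht
    exact ((hG' t (by have := ht.1; linarith)).continuousAt).continuousWithinAt
  have hderiv : ∀ t ∈ Set.Ioo s (s + 1),
      HasDerivAt G (x t * Real.cos (θ t) + lam * x t) t := fun t ht =>
    hG' t (by have := ht.1; linarith)
  obtain ⟨c, hc, hceq⟩ := exists_hasDerivAt_eq_slope G _ hlt hcont hderiv
  have hc0 : s₀ ≤ c := le_trans hss0 hc.1.le
  obtain ⟨hxc, hcosc⟩ := hs₀ c hc0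
  have hval : G (s + 1) - G s = x c * Real.cos (θ c) + lam * x c := by
    rw [hceq]; ring_nf
  have habs2 : |G (s + 1) - G s| = x c * |Real.cos (θ c) + lam| := by
    rw [hval]
    have : x c * Real.cos (θ c) + lam * x c = x c * (Real.cos (θ c) + lam) := by ring
    rw [this, abs_mul, abs_of_pos (by linarith : (0:ℝ) < x c)]
  have : ε ≤ |G (s + 1) - G s| := by
    rw [habs2]
    calc ε = 1 * ε := (one_mul ε).symm
    _ ≤ x c * |Real.cos (θ c) + lam| :=
        mul_le_mul hxc hcosc hε.le (by linarith)
  linarith [hsG, this]
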